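/- Let F₂ be the free group on two generators a, b, let w ∈ F₂ with w ≠ e, and let M = {0, 1, …, 2|w|}, where |w| denotes the word length of w. Then there exists a group homomorphism φ : F₂ → Sym(M) such that φ(w) ≠ id and |φ(v)(i) − i| ≤ 2|v| for all i ∈ M and all v ∈ F₂. -/

import Mathlib

open Equiv List

/-- The word length of an element of the free group on two generators: the smallest
`n` such that `w` can be represented by a word of length `n` in the generators and
their inverses. -/
noncomputable def wordLength (w : FreeGroup (Fin 2)) : ℕ :=
  sInf {n : ℕ | ∃ l : List (Fin 2 × Bool), l.length = n ∧ FreeGroup.mk l = w}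

namespace Stmt11

/-- 3-cycle a → b → c → a on ℕ. -/
def cyc (a b c : ℕ) : Equiv.Perm ℕ := Equiv.swap a b * Equiv.swap b c

lemma cyc_a {a b c : ℕ} (hab : a ≠ b) (hac : a ≠ c) : cyc a b c a = b := by
  simp [cyc, Equiv.Perm.mul_apply, Equiv.swap_apply_of_ne_of_ne hab hac, Equiv.swap_apply_left]

lemma cyc_b {a b c : ℕ} (hab : a ≠ b) (hbc : b ≠ c) (hac : a ≠ c) : cyc a b c b = c := by
  simp [cyc, Equiv.Perm.mul_apply, Equiv.swap_apply_left,
    Equiv.swap_apply_of_ne_of_ne hac.symm hbc.symm]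

lemma cyc_c {a b c : ℕ} (hbc : b ≠ c) : cyc a b c c = a := by
  simp [cyc, Equiv.Perm.mul_apply, Equiv.swap_apply_right, Equiv.swap_apply_left]

lemma cyc_fix {a b c q : ℕ} (ha : q ≠ a) (hb : q ≠ b) (hc : q ≠ c) : cyc a b c q = q := by
  simp [cyc, Equiv.Perm.mul_apply, Equiv.swap_apply_of_ne_of_ne hb hc,
    Equiv.swap_apply_of_ne_of_ne ha hb]

/-- letter at (1-indexed) position `t`. -/
def sfun (L : List (Fin 2 × Bool)) : ℕ → Option (Fin 2 × Bool)
  | 0 => none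
  | t+1 => L[t]?

lemma sfun_some {L : List (Fin 2 × Bool)} {t : ℕ} {c} (h : sfun L t = some c) :
    1 ≤ t ∧ t ≤ L.length := by
  cases t with
  | zero => simp [sfun] at h
  | succ t =>
    refine ⟨Nat.succ_le_succ (Nat.zero_le _), ?_⟩
    obtain ⟨h1, -⟩ := List.getElem?_eq_some_iff.mp h
    omega


variable (L : List (Fin 2 × Bool)) (x : Fin 2)

/-- gadget for a positive occurrence of x at position t : 2t → 2t-2 → 2t-1 → 2t -/
def Ggad (t : ℕ) : Equiv.Perm ℕ :=
  if sfun L t = some (x, true) then cyc (2*t) (2*t-2) (2*t-1) else 1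

/-- gadget for a negative occurrence of x at position t : 2t-2 → 2t → 2t-1 → 2t-2 -/
def Hgad (t : ℕ) : Equiv.Perm ℕ :=
  if sfun L t = some (x, false) then cyc (2*t-2) (2*t) (2*t-1) else 1

lemma Ggad_fix {t q : ℕ} (h : q + 2 < 2*t ∨ 2*t < q) : Ggad L x t q = q := by
  unfold Ggad
  split
  · next hs =>
    have ht := (sfun_some hs).1
    exact cyc_fix (by omega) (by omega) (by omega)
  · rfl

lemma Hgad_fix {t q : ℕ} (h : q + 2 < 2*t ∨ 2*t < q) : Hgad L x t q = q := by
  unfold Hgad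
  split
  · next hs =>
    have ht := (sfun_some hs).1
    exact cyc_fix (by omega) (by omega) (by omega)
  · rfl

lemma Ggad_one {t : ℕ} (h : ¬ sfun L t = some (x, true)) : Ggad L x t = 1 := if_neg h
lemma Hgad_one {t : ℕ} (h : ¬ sfun L t = some (x, false)) : Hgad L x t = 1 := if_neg h

lemma Ggad_hi {t : ℕ} (h : sfun L t = some (x, true)) : Ggad L x t (2*t) = 2*t - 2 := by
  have ht := (sfun_some h).1
  rw [Ggad, if_pos h]; exact cyc_a (by omega) (by omega)

lemma Ggad_lo {t : ℕ} (h : sfun L t = some (x, true)) : Ggad L x t (2*t-2) = 2*t - 1 := by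
  have ht := (sfun_some h).1
  rw [Ggad, if_pos h]; exact cyc_b (by omega) (by omega) (by omega)

lemma Ggad_mid {t : ℕ} (h : sfun L t = some (x, true)) : Ggad L x t (2*t-1) = 2*t := by
  have ht := (sfun_some h).1
  rw [Ggad, if_pos h]; exact cyc_c (by omega)

lemma Hgad_lo {t : ℕ} (h : sfun L t = some (x, false)) : Hgad L x t (2*t-2) = 2*t := by
  have ht := (sfun_some h).1
  rw [Hgad, if_pos h]; exact cyc_a (by omega) (by omega)

lemma Hgad_hi {t : ℕ} (h : sfun L t = some (x, false)) : Hgad L x t (2*t) = 2*t - 1 := by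
  have ht := (sfun_some h).1
  rw [Hgad, if_pos h]; exact cyc_b (by omega) (by omega) (by omega)

lemma Hgad_mid {t : ℕ} (h : sfun L t = some (x, false)) : Hgad L x t (2*t-1) = 2*t - 2 := by
  have ht := (sfun_some h).1
  rw [Hgad, if_pos h]; exact cyc_c (by omega)

/-- `A`-part: all the positive gadgets, applied in ascending order of position. -/
def AP : Equiv.Perm ℕ := (((List.range' 1 L.length).map (Ggad L x)).reverse).prod

/-- `B`-part: all the negative gadgets, applied in descending order of position. -/
def BP : Equiv.Perm ℕ := ((((List.range' 1 L.length).reverse).map (Hgad L x)).reverse).prod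

lemma revprod_apply (l : List ℕ) (f : ℕ → Equiv.Perm ℕ) (p : ℕ) :
    ((l.map f).reverse).prod p = l.foldl (fun q u => f u q) p := by
  induction l generalizing p with
  | nil => rfl
  | cons u l ih =>
    simp only [List.map_cons, List.reverse_cons, List.prod_append, List.prod_cons,
      List.prod_nil, mul_one, Equiv.Perm.mul_apply, List.foldl_cons]
    exact ih (f u p)

lemma foldl_fix {f : ℕ → Equiv.Perm ℕ} {p : ℕ} (l : List ℕ) (h : ∀ u ∈ l, f u p = p) :
    l.foldl (fun q u => f u q) p = p := by
  induction l with
  | nil => rfl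
  | cons u l ih =>
    simp only [List.foldl_cons, h u List.mem_cons_self]
    exact ih fun v hv => h v (List.mem_cons_of_mem _ hv)

lemma AP_apply (p : ℕ) :
    AP L x p = (List.range' 1 L.length).foldl (fun q u => Ggad L x u q) p :=
  revprod_apply _ _ p

lemma BP_apply (p : ℕ) :
    BP L x p = ((List.range' 1 L.length).reverse).foldl (fun q u => Hgad L x u q) p :=
  revprod_apply _ _ p


lemma range'_split {n t : ℕ} (h1 : 1 ≤ t) (h2 : t ≤ n) :
    List.range' 1 n = List.range' 1 (t-1) ++ [t] ++ List.range' (t+1) (n-t) := by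
  have e1 : List.range' t (n-t+1) = t :: List.range' (t+1) (n-t) := by
    have : n - t + 1 = (n-t) + 1 := rfl
    rw [this, List.range'_succ]
  have e2 := List.range'_append_1 (s := 1) (m := t-1) (n := n-t+1)
  rw [show 1 + (t-1) = t by omega] at e2
  rw [show t - 1 + (n - t + 1) = n by omega] at e2
  rw [← e2, e1]; simp

lemma rev_range'_split {n t : ℕ} (h1 : 1 ≤ t) (h2 : t ≤ n) :
    (List.range' 1 n).reverse =
      (List.range' (t+1) (n-t)).reverse ++ [t] ++ (List.range' 1 (t-1)).reverse := by
  rw [range'_split h1 h2]; simp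

section Eval
variable {L : List (Fin 2 × Bool)} {x : Fin 2}

lemma AP_fix_even {t : ℕ} (h1 : ¬ sfun L t = some (x, true))
    (h2 : ¬ sfun L (t+1) = some (x, true)) : AP L x (2*t) = 2*t := by
  rw [AP_apply]
  refine foldl_fix _ fun u hu => ?_
  rw [List.mem_range'_1] at hu
  rcases eq_or_ne u t with rfl | hut
  · rw [Ggad_one L x h1]; rfl
  rcases eq_or_ne u (t+1) with rfl | hut1
  · rw [Ggad_one L x h2]; rfl
  · exact Ggad_fix L x (by omega)

lemma AP_fix_odd {t : ℕ} (h2 : ¬ sfun L (t+1) = some (x, true)) :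
    AP L x (2*t+1) = 2*t+1 := by
  rw [AP_apply]
  refine foldl_fix _ fun u hu => ?_
  rw [List.mem_range'_1] at hu
  rcases eq_or_ne u (t+1) with rfl | hut1
  · rw [Ggad_one L x h2]; rfl
  · exact Ggad_fix L x (by omega)

lemma AP_1 {t : ℕ} (h : sfun L t = some (x, true)) : AP L x (2*t) = 2*t - 2 := by
  obtain ⟨ht1, ht2⟩ := sfun_some h
  rw [AP_apply, range'_split ht1 ht2, List.foldl_append, List.foldl_append]
  simp only [List.foldl_cons, List.foldl_nil]
  have e1 : List.foldl (fun q u => Ggad L x u q) (2*t) (List.range' 1 (t-1)) = 2*t :=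
    foldl_fix _ fun u hu => by
      rw [List.mem_range'_1] at hu
      exact Ggad_fix L x (by omega)
  rw [e1, Ggad_hi L x h]
  refine foldl_fix _ fun u hu => ?_
  rw [List.mem_range'_1] at hu
  exact Ggad_fix L x (by omega)

lemma AP_2 {t : ℕ} (h1 : ¬ sfun L t = some (x, true))
    (h : sfun L (t+1) = some (x, true)) : AP L x (2*t) = 2*t + 1 := by
  obtain ⟨ht1, ht2⟩ := sfun_some h
  rw [AP_apply, range'_split (show 1 ≤ t+1 by omega) ht2, List.foldl_append, List.foldl_append]
  simp only [List.foldl_cons, List.foldl_nil]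
  have e1 : List.foldl (fun q u => Ggad L x u q) (2*t) (List.range' 1 (t+1-1)) = 2*t :=
    foldl_fix _ fun u hu => by
      rw [List.mem_range'_1] at hu
      rcases eq_or_ne u t with rfl | hut
      · rw [Ggad_one L x h1]; rfl
      · exact Ggad_fix L x (by omega)
  rw [e1, show (2*t : ℕ) = 2*(t+1) - 2 by omega, Ggad_lo L x h,
    show (2*(t+1) - 1 : ℕ) = 2*t + 1 by omega]
  refine foldl_fix _ fun u hu => ?_
  rw [List.mem_range'_1] at hu
  exact Ggad_fix L x (by omega)

lemma AP_3 {t : ℕ} (h : sfun L (t+1) = some (x, true))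
    (h2 : sfun L (t+2) = some (x, true)) : AP L x (2*t+1) = 2*t + 3 := by
  obtain ⟨ht1, ht2⟩ := sfun_some h2
  rw [AP_apply, range'_split (show 1 ≤ t+1 by omega) (show t+1 ≤ L.length by omega),
    List.foldl_append, List.foldl_append]
  simp only [List.foldl_cons, List.foldl_nil]
  have e1 : List.foldl (fun q u => Ggad L x u q) (2*t+1) (List.range' 1 (t+1-1)) = 2*t+1 :=
    foldl_fix _ fun u hu => by
      rw [List.mem_range'_1] at hu
      exact Ggad_fix L x (by omega)
  rw [e1, show (2*t+1 : ℕ) = 2*(t+1) - 1 by omega, Ggad_mid L x h]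
  rw [show L.length - (t+1) = (L.length - (t+2)) + 1 by omega, List.range'_succ,
    List.foldl_cons]
  rw [show (t+1+1 : ℕ) = t+2 by omega, show (2*(t+1) : ℕ) = 2*(t+2) - 2 by omega,
    Ggad_lo L x h2, show (2*(t+2) - 1 : ℕ) = 2*t + 3 by omega]
  refine foldl_fix _ fun u hu => ?_
  rw [List.mem_range'_1] at hu
  exact Ggad_fix L x (by omega)

lemma AP_4 {t : ℕ} (h : sfun L (t+1) = some (x, true))
    (h2 : ¬ sfun L (t+2) = some (x, true)) : AP L x (2*t+1) = 2*t + 2 := by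
  obtain ⟨ht1, ht2⟩ := sfun_some h
  rw [AP_apply, range'_split (show 1 ≤ t+1 by omega) ht2, List.foldl_append, List.foldl_append]
  simp only [List.foldl_cons, List.foldl_nil]
  have e1 : List.foldl (fun q u => Ggad L x u q) (2*t+1) (List.range' 1 (t+1-1)) = 2*t+1 :=
    foldl_fix _ fun u hu => by
      rw [List.mem_range'_1] at hu
      exact Ggad_fix L x (by omega)
  rw [e1, show (2*t+1 : ℕ) = 2*(t+1) - 1 by omega, Ggad_mid L x h,
    show (2*(t+1) : ℕ) = 2*t + 2 by omega]
  refine foldl_fix _ fun u hu => ?_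
  rw [List.mem_range'_1] at hu
  rcases eq_or_ne u (t+2) with rfl | hut
  · rw [Ggad_one L x h2]; rfl
  · exact Ggad_fix L x (by omega)

lemma BP_fix_even {t : ℕ} (h1 : ¬ sfun L t = some (x, false))
    (h2 : ¬ sfun L (t+1) = some (x, false)) : BP L x (2*t) = 2*t := by
  rw [BP_apply]
  refine foldl_fix _ fun u hu => ?_
  rw [List.mem_reverse, List.mem_range'_1] at hu
  rcases eq_or_ne u t with rfl | hut
  · rw [Hgad_one L x h1]; rfl
  rcases eq_or_ne u (t+1) with rfl | hut1
  · rw [Hgad_one L x h2]; rfl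
  · exact Hgad_fix L x (by omega)

lemma BP_fix_odd {t : ℕ} (h2 : ¬ sfun L (t+1) = some (x, false)) :
    BP L x (2*t+1) = 2*t+1 := by
  rw [BP_apply]
  refine foldl_fix _ fun u hu => ?_
  rw [List.mem_reverse, List.mem_range'_1] at hu
  rcases eq_or_ne u (t+1) with rfl | hut1
  · rw [Hgad_one L x h2]; rfl
  · exact Hgad_fix L x (by omega)

lemma BP_1 {t : ℕ} (h : sfun L (t+1) = some (x, false)) : BP L x (2*t) = 2*t + 2 := by
  obtain ⟨ht1, ht2⟩ := sfun_some h
  rw [BP_apply, rev_range'_split (show 1 ≤ t+1 by omega) ht2, List.foldl_append,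
    List.foldl_append]
  simp only [List.foldl_cons, List.foldl_nil]
  have e1 : List.foldl (fun q u => Hgad L x u q) (2*t)
      ((List.range' (t+1+1) (L.length-(t+1))).reverse) = 2*t :=
    foldl_fix _ fun u hu => by
      rw [List.mem_reverse, List.mem_range'_1] at hu
      exact Hgad_fix L x (by omega)
  rw [e1, show (2*t : ℕ) = 2*(t+1) - 2 by omega, Hgad_lo L x h]
  refine foldl_fix _ fun u hu => ?_
  rw [List.mem_reverse, List.mem_range'_1] at hu
  exact Hgad_fix L x (by omega)

lemma BP_2 {t : ℕ} (h : sfun L t = some (x, false))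
    (h1 : ¬ sfun L (t+1) = some (x, false)) : BP L x (2*t) = 2*t - 1 := by
  obtain ⟨ht1, ht2⟩ := sfun_some h
  rw [BP_apply, rev_range'_split ht1 ht2, List.foldl_append, List.foldl_append]
  simp only [List.foldl_cons, List.foldl_nil]
  have e1 : List.foldl (fun q u => Hgad L x u q) (2*t)
      ((List.range' (t+1) (L.length-t)).reverse) = 2*t :=
    foldl_fix _ fun u hu => by
      rw [List.mem_reverse, List.mem_range'_1] at hu
      rcases eq_or_ne u (t+1) with rfl | hut
      · rw [Hgad_one L x h1]; rfl
      · exact Hgad_fix L x (by omega)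
  rw [e1, Hgad_hi L x h]
  refine foldl_fix _ fun u hu => ?_
  rw [List.mem_reverse, List.mem_range'_1] at hu
  exact Hgad_fix L x (by omega)

lemma BP_3 {t : ℕ} (h : sfun L (t+1) = some (x, false))
    (h0 : sfun L t = some (x, false)) : BP L x (2*t+1) = 2*t - 1 := by
  obtain ⟨ht1, ht2⟩ := sfun_some h
  obtain ⟨ht3, ht4⟩ := sfun_some h0
  rw [BP_apply, rev_range'_split (show 1 ≤ t+1 by omega) ht2, List.foldl_append,
    List.foldl_append]
  simp only [List.foldl_cons, List.foldl_nil]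
  have e1 : List.foldl (fun q u => Hgad L x u q) (2*t+1)
      ((List.range' (t+1+1) (L.length-(t+1))).reverse) = 2*t+1 :=
    foldl_fix _ fun u hu => by
      rw [List.mem_reverse, List.mem_range'_1] at hu
      exact Hgad_fix L x (by omega)
  rw [e1, show (2*t+1 : ℕ) = 2*(t+1) - 1 by omega, Hgad_mid L x h,
    show (2*(t+1) - 2 : ℕ) = 2*t by omega]
  rw [show (t+1-1 : ℕ) = t by omega, rev_range'_split ht3 (le_refl t)]
  simp only [Nat.sub_self, List.range'_zero, List.reverse_nil, List.nil_append,
    List.foldl_append, List.foldl_cons, List.foldl_nil]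
  rw [Hgad_hi L x h0]
  refine foldl_fix _ fun u hu => ?_
  rw [List.mem_reverse, List.mem_range'_1] at hu
  exact Hgad_fix L x (by omega)

lemma BP_4 {t : ℕ} (h : sfun L (t+1) = some (x, false))
    (h0 : ¬ sfun L t = some (x, false)) : BP L x (2*t+1) = 2*t := by
  obtain ⟨ht1, ht2⟩ := sfun_some h
  rw [BP_apply, rev_range'_split (show 1 ≤ t+1 by omega) ht2, List.foldl_append,
    List.foldl_append]
  simp only [List.foldl_cons, List.foldl_nil]
  have e1 : List.foldl (fun q u => Hgad L x u q) (2*t+1)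
      ((List.range' (t+1+1) (L.length-(t+1))).reverse) = 2*t+1 :=
    foldl_fix _ fun u hu => by
      rw [List.mem_reverse, List.mem_range'_1] at hu
      exact Hgad_fix L x (by omega)
  rw [e1, show (2*t+1 : ℕ) = 2*(t+1) - 1 by omega, Hgad_mid L x h,
    show (2*(t+1) - 2 : ℕ) = 2*t by omega]
  refine foldl_fix _ fun u hu => ?_
  rw [List.mem_reverse, List.mem_range'_1] at hu
  rcases eq_or_ne u t with rfl | hut
  · rw [Hgad_one L x h0]; rfl
  · exact Hgad_fix L x (by omega)

end Eval
/-- The permutation associated to generator `x`. -/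
def SP (L : List (Fin 2 × Bool)) (x : Fin 2) : Equiv.Perm ℕ := AP L x * BP L x

section SPfacts
variable {L : List (Fin 2 × Bool)} {x : Fin 2}
variable (hred : ∀ (t : ℕ) (y : Fin 2) (b : Bool),
    sfun L t = some (y, b) → sfun L (t+1) ≠ some (y, !b))

include hred

lemma SP_pos {t : ℕ} (h : sfun L t = some (x, true)) : SP L x (2*t) = 2*t - 2 := by
  have hF0 : ¬ sfun L t = some (x, false) := by rw [h]; simp
  have hF1 : ¬ sfun L (t+1) = some (x, false) := by
    have := hred t x true h; simpa using this
  show AP L x (BP L x (2*t)) = _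
  rw [BP_fix_even hF0 hF1, AP_1 h]

lemma SP_neg {t : ℕ} (h : sfun L (t+1) = some (x, false)) : SP L x (2*t) = 2*t + 2 := by
  have hT1 : ¬ sfun L (t+1) = some (x, true) := by rw [h]; simp
  have hT2 : ¬ sfun L (t+2) = some (x, true) := by
    have := hred (t+1) x false h; simpa using this
  show AP L x (BP L x (2*t)) = _
  rw [BP_1 h, show (2*t+2 : ℕ) = 2*(t+1) by omega, AP_fix_even hT1 hT2]

lemma SP_disp (p : ℕ) : SP L x p ≤ p + 2 ∧ p ≤ SP L x p + 2 := by
  show AP L x (BP L x p) ≤ p + 2 ∧ p ≤ AP L x (BP L x p) + 2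
  rcases Nat.even_or_odd p with ⟨t, hp⟩ | ⟨t, hp⟩
  · subst hp
    rw [show t + t = 2*t by omega]
    by_cases hF1 : sfun L (t+1) = some (x, false)
    · have hT1 : ¬ sfun L (t+1) = some (x, true) := by rw [hF1]; simp
      have hT2 : ¬ sfun L (t+2) = some (x, true) := by
        have := hred (t+1) x false hF1; simpa using this
      rw [BP_1 hF1, show (2*t+2 : ℕ) = 2*(t+1) by omega, AP_fix_even hT1 hT2]
      omega
    by_cases hF0 : sfun L t = some (x, false)
    · obtain ⟨ht1, -⟩ := sfun_some hF0
      have hT0 : ¬ sfun L t = some (x, true) := by rw [hF0]; simp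
      have hT0' : ¬ sfun L ((t-1)+1) = some (x, true) := by
        rw [show (t-1)+1 = t by omega]; exact hT0
      rw [BP_2 hF0 hF1, show (2*t-1 : ℕ) = 2*(t-1)+1 by omega, AP_fix_odd hT0']
      omega
    · rw [BP_fix_even hF0 hF1]
      by_cases hT0 : sfun L t = some (x, true)
      · rw [AP_1 hT0]; obtain ⟨ht1, -⟩ := sfun_some hT0; omega
      by_cases hT1 : sfun L (t+1) = some (x, true)
      · rw [AP_2 hT0 hT1]; omega
      · rw [AP_fix_even hT0 hT1]; omega
  · subst hp
    rw [show 2*t + 1 = 2*t+1 by omega]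
    by_cases hF1 : sfun L (t+1) = some (x, false)
    · by_cases hF0 : sfun L t = some (x, false)
      · obtain ⟨ht1, -⟩ := sfun_some hF0
        have hT0' : ¬ sfun L ((t-1)+1) = some (x, true) := by
          rw [show (t-1)+1 = t by omega, hF0]; simp
        rw [BP_3 hF1 hF0, show (2*t-1 : ℕ) = 2*(t-1)+1 by omega, AP_fix_odd hT0']
        omega
      · have hT0 : ¬ sfun L t = some (x, true) := by
          intro hc
          have h' := hred t x true hc
          simp only [Bool.not_true] at h'
          exact h' hF1
        have hT1 : ¬ sfun L (t+1) = some (x, true) := by rw [hF1]; simp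
        rw [BP_4 hF1 hF0, AP_fix_even hT0 hT1]
        omega
    · rw [BP_fix_odd hF1]
      by_cases hT1 : sfun L (t+1) = some (x, true)
      · by_cases hT2 : sfun L (t+2) = some (x, true)
        · rw [AP_3 hT1 hT2]; omega
        · rw [AP_4 hT1 hT2]; omega
      · rw [AP_fix_odd hT1]; omega

omit hred

lemma SP_supp {p : ℕ} (hp : 2 * L.length < p) : SP L x p = p := by
  show AP L x (BP L x p) = p
  have hB : BP L x p = p := by
    rw [BP_apply]
    refine foldl_fix _ fun u hu => ?_
    rw [List.mem_reverse, List.mem_range'_1] at hu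
    exact Hgad_fix L x (by omega)
  rw [hB, AP_apply]
  refine foldl_fix _ fun u hu => ?_
  rw [List.mem_range'_1] at hu
  exact Ggad_fix L x (by omega)

end SPfacts

lemma perm_inv_disp (π : Equiv.Perm ℕ) (h : ∀ q, π q ≤ q + 2 ∧ q ≤ π q + 2) (p : ℕ) :
    π⁻¹ p ≤ p + 2 ∧ p ≤ π⁻¹ p + 2 := by
  have := h (π⁻¹ p)
  rw [show π (π⁻¹ p) = p from π.apply_symm_apply p] at this
  omega

/-- Restrict a permutation of ℕ preserving `[0,m)` to `Fin m`. -/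
def finRestrict (π : Equiv.Perm ℕ) (m : ℕ) (h : ∀ p, p < m ↔ π p < m) :
    Equiv.Perm (Fin m) where
  toFun i := ⟨π i, (h i).1 i.2⟩
  invFun i := ⟨π⁻¹ i, by
    have := (h (π⁻¹ (i : ℕ))).2
    rw [show π (π⁻¹ (i : ℕ)) = i from π.apply_symm_apply _] at this
    exact this i.2⟩
  left_inv i := by simp
  right_inv i := by simp

@[simp] lemma finRestrict_apply (π : Equiv.Perm ℕ) (m : ℕ) (h) (i : Fin m) :
    (finRestrict π m h i : ℕ) = π i := rfl

@[simp] lemma finRestrict_inv_apply (π : Equiv.Perm ℕ) (m : ℕ) (h) (i : Fin m) :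
    ((finRestrict π m h)⁻¹ i : ℕ) = π⁻¹ i := rfl

lemma perm_preserve (π : Equiv.Perm ℕ) (m : ℕ) (hs : ∀ p, m ≤ p → π p = p) :
    ∀ p, p < m ↔ π p < m := by
  intro p
  constructor
  · intro hp
    by_contra hc
    push_neg at hc
    have h2 : π (π p) = π p := hs _ hc
    have := π.injective h2
    omega
  · intro hp
    by_contra hc
    push_neg at hc
    rw [hs p hc] at hp
    omega

lemma toWord_hred (w : FreeGroup (Fin 2)) :
    ∀ (t : ℕ) (y : Fin 2) (b : Bool),
      sfun w.toWord t = some (y, b) → sfun w.toWord (t+1) ≠ some (y, !b) := by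
  intro t y b h1 h2
  cases t with
  | zero => simp [sfun] at h1
  | succ t =>
    set L := w.toWord with hL
    obtain ⟨hlt1, he1⟩ := List.getElem?_eq_some_iff.mp h1
    obtain ⟨hlt2, he2⟩ := List.getElem?_eq_some_iff.mp h2
    have hdec : L = L.take t ++ (y, b) :: (y, !b) :: L.drop (t+2) := by
      conv_lhs => rw [← List.take_append_drop t L]
      congr 1
      rw [List.drop_eq_getElem_cons hlt1, he1, List.drop_eq_getElem_cons hlt2, he2]
    have hr : FreeGroup.reduce L = L := FreeGroup.reduce_toWord w
    rw [hdec] at hr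
    exact FreeGroup.reduce.not hr

lemma wordLength_eq (v : FreeGroup (Fin 2)) : wordLength v = v.toWord.length := by
  refine le_antisymm (Nat.sInf_le ⟨v.toWord, rfl, FreeGroup.mk_toWord⟩) ?_
  refine le_csInf ⟨v.toWord.length, v.toWord, rfl, FreeGroup.mk_toWord⟩ ?_
  rintro k ⟨l, rfl, hl⟩
  have := FreeGroup.norm_mk_le (L₁ := l)
  rw [hl] at this
  exact this

end Stmt11


open Stmt11 in
set_option maxHeartbeats 2000000 in
/-- For every non-identity `w ∈ F₂` there is a homomorphism
`φ : F₂ → Sym({0, …, 2|w|})` with `φ(w) ≠ id` and `|φ(v)(i) − i| ≤ 2|v|` for all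
`i` and all `v ∈ F₂`. -/
theorem stmt_11 (w : FreeGroup (Fin 2)) (hw : w ≠ 1) :
    ∃ φ : FreeGroup (Fin 2) →* Equiv.Perm (Fin (2 * wordLength w + 1)),
      φ w ≠ 1 ∧
      ∀ (v : FreeGroup (Fin 2)) (i : Fin (2 * wordLength w + 1)),
        |((φ v i : ℕ) : ℤ) - ((i : ℕ) : ℤ)| ≤ 2 * (wordLength v : ℤ) := by
  classical
  set L := w.toWord with hL
  have hWL : wordLength w = L.length := wordLength_eq w
  set n := L.length with hn
  have hn1 : 1 ≤ n := by
    have hne : L ≠ [] := fun h => hw (FreeGroup.toWord_eq_nil_iff.mp h)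
    have := List.length_pos_iff.mpr hne
    omega
  have hred : ∀ (t : ℕ) (y : Fin 2) (b : Bool),
      sfun L t = some (y, b) → sfun L (t+1) ≠ some (y, !b) := toWord_hred w
  rw [hWL]
  set m := 2 * n + 1 with hm
  have hpres : ∀ x : Fin 2, ∀ p, p < m ↔ SP L x p < m := fun x =>
    perm_preserve _ _ (fun p hp => SP_supp (by omega))
  set α : Fin 2 → Equiv.Perm (Fin m) := fun x => finRestrict (SP L x) m (hpres x) with hα
  refine ⟨FreeGroup.lift α, ?_, ?_⟩
  · -- `φ w ≠ 1`
    have traj : ∀ k, k ≤ n →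
        (((L.drop (n - k)).map fun c => cond c.2 (α c.1) (α c.1)⁻¹).prod)
          ⟨2*n, by omega⟩ = ⟨2*(n-k), by omega⟩ := by
      intro k
      induction k with
      | zero =>
        intro _
        have hdz : L.drop (n-0) = [] := by rw [Nat.sub_zero, hn, List.drop_length]
        rw [hdz]
        simp only [List.map_nil, List.prod_nil, Equiv.Perm.one_apply, Fin.mk.injEq]
        omega
      | succ k ih =>
        intro hk
        have hkn := ih (by omega)
        have hdrop : L.drop (n-(k+1)) = L[n-(k+1)]'(by omega) :: L.drop (n-k) := by
          rw [List.drop_eq_getElem_cons (by omega)]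
          congr 2
          omega
        rw [hdrop, List.map_cons, List.prod_cons, Equiv.Perm.mul_apply, hkn]
        set j := n - (k+1) with hjdef
        have hjn : j < n := by omega
        have hsf : sfun L (j+1) = some (L[j]'hjn) := by
          show L[j]? = _
          rw [List.getElem?_eq_getElem hjn]
        rcases hLj : L[j]'hjn with ⟨y, b⟩
        rw [hLj] at hsf
        cases b
        · -- negative letter : apply (α y)⁻¹
          simp only [cond_false]
          apply Fin.ext
          show ((α y)⁻¹ _ : ℕ) = 2*(n-(k+1))
          rw [hα, finRestrict_inv_apply]
          have hsp : SP L y (2*j) = 2*(n-k) := by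
            rw [SP_neg hred hsf]; omega
          show (SP L y)⁻¹ (2*(n-k)) = 2*j
          rw [← hsp]; exact (SP L y).symm_apply_apply _
        · -- positive letter : apply α y
          simp only [cond_true]
          apply Fin.ext
          show (α y _ : ℕ) = 2*(n-(k+1))
          rw [hα, finRestrict_apply]
          show SP L y (2*(n-k)) = 2*j
          rw [show 2*(n-k) = 2*(j+1) by omega, SP_pos hred hsf]
          omega
    have h2n : ((L.map fun c => cond c.2 (α c.1) (α c.1)⁻¹).prod)
        ⟨2*n, by omega⟩ = ⟨0, by omega⟩ := by
      have h := traj n (le_refl n)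
      convert h using 3
      · rw [Nat.sub_self, List.drop_zero]
      · omega
    intro hone
    have hfw : FreeGroup.lift α w ⟨2*n, by omega⟩ = ⟨2*n, by omega⟩ := by
      rw [hone]; rfl
    rw [show FreeGroup.lift α w = FreeGroup.lift α (FreeGroup.mk L) by rw [hL, FreeGroup.mk_toWord], FreeGroup.lift_mk] at hfw
    have hcontra := h2n.symm.trans hfw
    rw [Fin.mk.injEq] at hcontra
    omega
  · -- displacement bound
    intro v i
    obtain ⟨l, hlen, hmk⟩ : ∃ l : List (Fin 2 × Bool),
        l.length = wordLength v ∧ FreeGroup.mk l = v := by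
      have hne : {k : ℕ | ∃ l : List (Fin 2 × Bool), l.length = k ∧ FreeGroup.mk l = v}.Nonempty :=
        ⟨v.toWord.length, v.toWord, rfl, FreeGroup.mk_toWord⟩
      exact Nat.sInf_mem hne
    have key : ∀ l' : List (Fin 2 × Bool), ∀ j : Fin m,
        (((l'.map fun c => cond c.2 (α c.1) (α c.1)⁻¹).prod j : ℕ) ≤ (j : ℕ) + 2 * l'.length) ∧
        ((j : ℕ) ≤ ((l'.map fun c => cond c.2 (α c.1) (α c.1)⁻¹).prod j : ℕ) + 2 * l'.length) := by
      intro l'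
      induction l' with
      | nil => intro j; simp
      | cons c l' ih =>
        intro j
        obtain ⟨ih1, ih2⟩ := ih j
        simp only [List.map_cons, List.prod_cons, Equiv.Perm.mul_apply, List.length_cons]
        set j' := ((l'.map fun c => cond c.2 (α c.1) (α c.1)⁻¹).prod) j with hj'
        rcases c with ⟨y, b⟩
        cases b
        · simp only [cond_false]
          have hval : (((α y)⁻¹) j' : ℕ) = (SP L y)⁻¹ (j' : ℕ) := by
            rw [hα, finRestrict_inv_apply]
          have hd := perm_inv_disp (SP L y) (SP_disp hred) (j' : ℕ)
          omega
        · simp only [cond_true]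
          have hval : ((α y) j' : ℕ) = SP L y (j' : ℕ) := by
            rw [hα, finRestrict_apply]
          have hd := SP_disp hred (p := (j' : ℕ)) (x := y)
          omega
    have hφ : (FreeGroup.lift α) v = ((l.map fun c => cond c.2 (α c.1) (α c.1)⁻¹).prod) := by
      rw [← hmk, FreeGroup.lift_mk]
    rw [hφ]
    obtain ⟨h1, h2⟩ := key l i
    rw [hlen] at h1 h2
    rw [abs_le]
    constructor <;> omega
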